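/- Let k ≥ 1 and let {H_n} be the PLRS generated by the coefficients [1, ..., 1, 0, 4] consisting of k ones, then a single 0, then 4 (so L = k + 2). Then {H_n} is incomplete; moreover, the nth Brown's gap satisfies B_{H,n} ≥ 0 for all n ≤ 2k + 2 and B_{H, 2k+3} < 0, i.e., the sequence fails Brown's criterion for the first time at the (2k+3)rd term (equivalently, the (2L−1)th term). -/

import Mathlib

/-- `H` (indexed from 1) is the Positive Linear Recurrence Sequence generated by the
coefficients `c 1, …, c L` (nonnegative integers with `L`, `c 1`, `c L` positive):
`H 1 = 1`, `H (n+1) = c 1 * H n + ⋯ + c n * H 1 + 1` for `1 ≤ n < L`, and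
`H (n+1) = c 1 * H n + ⋯ + c L * H (n+1-L)` for `n ≥ L`. -/
def IsPLRS (L : ℕ) (c : ℕ → ℕ) (H : ℕ → ℕ) : Prop :=
  0 < L ∧ 0 < c 1 ∧ 0 < c L ∧ H 1 = 1 ∧
  (∀ n, 1 ≤ n → n < L →
    H (n + 1) = (∑ j ∈ Finset.Icc 1 n, c j * H (n + 1 - j)) + 1) ∧
  (∀ n, L ≤ n →
    H (n + 1) = ∑ j ∈ Finset.Icc 1 L, c j * H (n + 1 - j))

/-- A sequence (indexed from 1) is complete if every positive integer is a sum of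
terms of the sequence over a finite set of distinct indices (each ≥ 1). -/
def SeqComplete (H : ℕ → ℕ) : Prop :=
  ∀ m : ℕ, 0 < m → ∃ S : Finset ℕ, (∀ i ∈ S, 1 ≤ i) ∧ m = ∑ i ∈ S, H i

/-- The `n`th Brown's gap of a sequence: `B_{H,n} = 1 + ∑_{i=1}^{n-1} H i − H n`. -/
def BrownGap (H : ℕ → ℕ) (n : ℕ) : ℤ :=
  1 + (∑ i ∈ Finset.Icc 1 (n - 1), (H i : ℤ)) - (H n : ℤ)

lemma aux_reflect (f : ℕ → ℕ) (m c : ℕ) (h : m ≤ c) :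
    ∑ j ∈ Finset.Icc 1 m, f (c + 1 - j) = ∑ i ∈ Finset.Icc (c + 1 - m) c, f i := by
  refine Finset.sum_nbij' (fun j => c + 1 - j) (fun i => c + 1 - i) ?_ ?_ ?_ ?_ ?_
  · intro a ha; simp only [Finset.mem_Icc] at *; omega
  · intro a ha; simp only [Finset.mem_Icc] at *; omega
  · intro a ha; simp only [Finset.mem_Icc] at *; omega
  · intro a ha; simp only [Finset.mem_Icc] at *; omega
  · intro a ha; rfl

theorem stmt14 (k : ℕ) (hk : 1 ≤ k) (H : ℕ → ℕ)
    (hH : IsPLRS (k + 2)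
      (fun j => if j ≤ k then 1 else if j = k + 2 then 4 else 0) H) :
    ¬ SeqComplete H ∧
    (∀ n, 1 ≤ n → n ≤ 2 * k + 2 → 0 ≤ BrownGap H n) ∧
    BrownGap H (2 * k + 3) < 0 := by
  obtain ⟨-, -, -, hH1, hrecA, hrecB⟩ := hH
  -- Recurrence in the small regime n ≤ k
  have hrec1 : ∀ n, 1 ≤ n → n ≤ k → H (n + 1) = (∑ i ∈ Finset.Icc 1 n, H i) + 1 := by
    intro n hn1 hnk
    rw [hrecA n hn1 (by omega)]
    congr 1
    have : ∀ j ∈ Finset.Icc 1 n,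
        (if j ≤ k then 1 else if j = k + 2 then 4 else 0) * H (n + 1 - j) = H (n + 1 - j) := by
      intro j hj; simp only [Finset.mem_Icc] at hj
      rw [if_pos (by omega), one_mul]
    rw [Finset.sum_congr rfl this, aux_reflect H n n le_rfl,
      show n + 1 - n = 1 from by omega]
  -- Recurrence at n = k + 1
  have hrec2 : H (k + 2) = (∑ i ∈ Finset.Icc 2 (k + 1), H i) + 1 := by
    have := hrecA (k + 1) (by omega) (by omega)
    rw [Finset.sum_Icc_succ_top (by omega)] at this
    simp only [Nat.lt_irrefl, if_neg (by omega : ¬ (k + 1 ≤ k)),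
      if_neg (by omega : ¬ (k + 1 = k + 2)), zero_mul, add_zero] at this
    rw [this]
    congr 1
    have : ∀ j ∈ Finset.Icc 1 k,
        (if j ≤ k then 1 else if j = k + 2 then 4 else 0) * H (k + 1 + 1 - j) = H (k + 1 + 1 - j) := by
      intro j hj; simp only [Finset.mem_Icc] at hj
      rw [if_pos (by omega), one_mul]
    rw [Finset.sum_congr rfl this]
    have h2 : ∀ j ∈ Finset.Icc 1 k, H (k + 1 + 1 - j) = H (k + 2 - j) := by
      intro j hj; congr 1
    rw [Finset.sum_congr rfl h2, show k + 2 = (k + 1) + 1 by ring]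
    rw [aux_reflect H k (k + 1) (by omega),
      show (k + 1) + 1 - k = 2 from by omega]
  -- Recurrence in the large regime n ≥ k + 2
  have hrec3 : ∀ n, k + 2 ≤ n →
      H (n + 1) = (∑ i ∈ Finset.Ioc (n - k) n, H i) + 4 * H (n - k - 1) := by
    intro n hn
    rw [hrecB n hn]
    rw [Finset.sum_Icc_succ_top (by omega), Finset.sum_Icc_succ_top (by omega)]
    simp only [if_neg (by omega : ¬ (k + 2 ≤ k)), if_pos rfl,
      if_neg (by omega : ¬ (k + 1 ≤ k)), if_neg (by omega : ¬ (k + 1 = k + 2)),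
      zero_mul, add_zero]
    have : ∀ j ∈ Finset.Icc 1 k,
        (if j ≤ k then 1 else if j = k + 2 then 4 else 0) * H (n + 1 - j) = H (n + 1 - j) := by
      intro j hj; simp only [Finset.mem_Icc] at hj
      rw [if_pos (by omega), one_mul]
    rw [Finset.sum_congr rfl this, aux_reflect H k n (by omega)]
    rw [show n + 1 - k = (n - k) + 1 by omega, Finset.Icc_add_one_left_eq_Ioc,
      show n + 1 - (k + 1 + 1) = n - k - 1 from by omega]
    norm_num
  -- Values in the small regime
  have hsmall : ∀ n, n ≤ k → H (n + 1) = 2 ^ n ∧ (∑ i ∈ Finset.Icc 1 (n + 1), H i) = 2 ^ (n + 1) - 1 := by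
    intro n
    induction n with
    | zero => intro _; simp [hH1]
    | succ m ih =>
      intro hm
      obtain ⟨ihH, ihS⟩ := ih (by omega)
      have hpow : 1 ≤ 2 ^ (m + 1) := Nat.one_le_two_pow
      have hHm2 : H (m + 2) = 2 ^ (m + 1) := by
        rw [hrec1 (m + 1) (by omega) hm, ihS]; omega
      constructor
      · exact hHm2
      · rw [Finset.sum_Icc_succ_top (by omega : 1 ≤ m + 1 + 1), ihS, hHm2]
        have : (2 : ℕ) ^ (m + 2) = 2 ^ (m + 1) * 2 := by ring
        omega
  have hHs : ∀ n, 1 ≤ n → n ≤ k + 1 → H n = 2 ^ (n - 1) := by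
    intro n h1 h2
    have := (hsmall (n - 1) (by omega)).1
    rwa [show n - 1 + 1 = n from by omega] at this
  have hSs : ∀ n, 1 ≤ n → n ≤ k + 1 → (∑ i ∈ Finset.Icc 1 n, H i) = 2 ^ n - 1 := by
    intro n h1 h2
    have := (hsmall (n - 1) (by omega)).2
    rwa [show n - 1 + 1 = n from by omega] at this
  -- value at k+2
  have hSk1 : (∑ i ∈ Finset.Icc 1 (k + 1), H i) = 2 ^ (k + 1) - 1 := hSs (k + 1) (by omega) le_rfl
  have hS2k1 : (∑ i ∈ Finset.Icc 2 (k + 1), H i) = 2 ^ (k + 1) - 2 := by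
    have hsplit := Finset.sum_Ioc_consecutive H (by omega : (0:ℕ) ≤ 1) (by omega : (1:ℕ) ≤ k + 1)
    rw [show Finset.Ioc (0:ℕ) 1 = Finset.Icc 1 1 from by rw [← Finset.Icc_add_one_left_eq_Ioc]; rfl,
      show Finset.Ioc (1:ℕ) (k+1) = Finset.Icc 2 (k+1) from by rw [← Finset.Icc_add_one_left_eq_Ioc]; rfl,
      show Finset.Ioc (0:ℕ) (k+1) = Finset.Icc 1 (k+1) from by rw [← Finset.Icc_add_one_left_eq_Ioc]; rfl] at hsplit
    simp only [Finset.Icc_self, Finset.sum_singleton, hH1] at hsplit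
    have hpow : 2 ≤ 2 ^ (k + 1) := by
      calc (2:ℕ) = 2 ^ 1 := by norm_num
      _ ≤ 2 ^ (k + 1) := Nat.pow_le_pow_right (by norm_num) (by omega)
    omega
  have hHk2 : H (k + 2) = 2 ^ (k + 1) - 1 := by
    rw [hrec2, hS2k1]
    have hpow : 2 ≤ 2 ^ (k + 1) := by
      calc (2:ℕ) = 2 ^ 1 := by norm_num
      _ ≤ 2 ^ (k + 1) := Nat.pow_le_pow_right (by norm_num) (by omega)
    omega
  have hSk2 : (∑ i ∈ Finset.Icc 1 (k + 2), H i) = 2 ^ (k + 2) - 2 := by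
    rw [Finset.sum_Icc_succ_top (by omega : 1 ≤ k + 2), hSk1, hHk2]
    have hpow : 1 ≤ 2 ^ (k + 1) := Nat.one_le_two_pow
    have : (2 : ℕ) ^ (k + 2) = 2 ^ (k + 1) * 2 := by ring
    omega
  -- positivity
  have hpos : ∀ n, 1 ≤ n → 1 ≤ H n := by
    intro n
    induction n using Nat.strong_induction_on with
    | _ n ih =>
      intro h1
      rcases le_or_gt n (k + 1) with h | h
      · rw [hHs n h1 h]; exact Nat.one_le_two_pow
      · rcases eq_or_lt_of_le (Nat.succ_le_of_lt h) with h' | h'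
        · rw [← h', hHk2]
          have : 2 ≤ 2 ^ (k + 1) := by
            calc (2:ℕ) = 2 ^ 1 := by norm_num
            _ ≤ 2 ^ (k + 1) := Nat.pow_le_pow_right (by norm_num) (by omega)
          omega
        · have hih := ih (n - 1 - k - 1) (by omega) (by omega)
          rw [show n = (n - 1) + 1 from by omega, hrec3 (n - 1) (by omega)]
          omega
  -- monotone step
  have hstep : ∀ n, 1 ≤ n → H n ≤ H (n + 1) := by
    intro n h1
    rcases le_or_gt n k with h | h
    · rw [hHs n h1 (by omega), hHs (n + 1) (by omega) (by omega)]
      exact Nat.pow_le_pow_right (by norm_num) (by omega)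
    · rcases eq_or_lt_of_le (Nat.succ_le_of_lt h) with h' | h'
      · rw [← h', hHs (k + 1) (by omega) le_rfl, hHk2]
        have h2 : (2:ℕ) ^ (k + 1) = 2 ^ k * 2 := by ring
        have h3 : 1 ≤ (2:ℕ) ^ k := Nat.one_le_two_pow
        simp only [show k + 1 - 1 = k from by omega]
        omega
      · have hn2 : k + 2 ≤ n := by omega
        have hmem : n ∈ Finset.Ioc (n - k) n := by simp only [Finset.mem_Ioc]; omega
        have hle : H n ≤ ∑ i ∈ Finset.Ioc (n - k) n, H i :=
          Finset.single_le_sum (fun i _ => Nat.zero_le _) hmem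
        rw [hrec3 n hn2]
        omega
  have hmono : ∀ a b, 1 ≤ a → a ≤ b → H a ≤ H b := by
    intro a b h1 hab
    induction b, hab using Nat.le_induction with
    | base => exact le_rfl
    | succ n hn ih => exact ih.trans (hstep n (by omega))
  -- Brown gap formula in the large regime
  have hgap : ∀ m, k + 2 ≤ m → BrownGap H (m + 1) =
      1 + ((∑ i ∈ Finset.Icc 1 (m - k), H i : ℕ) : ℤ) - 4 * (H (m - k - 1) : ℤ) := by
    intro m hm
    have hsplit := Finset.sum_Ioc_consecutive H (Nat.zero_le (m - k)) (by omega : m - k ≤ m)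
    rw [show Finset.Ioc 0 (m - k) = Finset.Icc 1 (m - k) from by rw [← Finset.Icc_add_one_left_eq_Ioc]; rfl,
      show Finset.Ioc 0 m = Finset.Icc 1 m from by rw [← Finset.Icc_add_one_left_eq_Ioc]; rfl] at hsplit
    have hcast : (∑ i ∈ Finset.Icc 1 m, (H i : ℤ)) = ((∑ i ∈ Finset.Icc 1 m, H i : ℕ) : ℤ) := by
      push_cast; rfl
    simp only [BrownGap, show m + 1 - 1 = m from by omega]
    rw [hcast, ← hsplit, hrec3 m hm]
    push_cast
    ring
  -- gap values
  have Bzero1 : ∀ n, 1 ≤ n → n ≤ k + 1 → BrownGap H n = 0 := by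
    intro n h1 h2
    rcases eq_or_lt_of_le h1 with h' | h'
    · simp [BrownGap, ← h', hH1]
    · have hcast : (∑ i ∈ Finset.Icc 1 (n - 1), (H i : ℤ))
          = ((∑ i ∈ Finset.Icc 1 (n - 1), H i : ℕ) : ℤ) := by push_cast; rfl
      simp only [BrownGap]
      rw [hcast, hSs (n - 1) (by omega) (by omega), hHs n h1 h2]
      have h4 : 1 ≤ (2:ℕ) ^ (n - 1) := Nat.one_le_two_pow
      omega
  have Bk2 : BrownGap H (k + 2) = 1 := by
    have hcast : (∑ i ∈ Finset.Icc 1 (k + 1), (H i : ℤ))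
        = ((∑ i ∈ Finset.Icc 1 (k + 1), H i : ℕ) : ℤ) := by push_cast; rfl
    simp only [BrownGap, show k + 2 - 1 = k + 1 from by omega]
    rw [hcast, hSk1, hHk2]
    have h4 : 1 ≤ (2:ℕ) ^ (k + 1) := Nat.one_le_two_pow
    omega
  have Bmid : ∀ m, k + 2 ≤ m → m ≤ 2 * k + 1 → BrownGap H (m + 1) = 0 := by
    intro m hm1 hm2
    rw [hgap m hm1, hSs (m - k) (by omega) (by omega), hHs (m - k - 1) (by omega) (by omega)]
    have h3 : (2:ℕ) ^ (m - k) = 2 ^ (m - k - 1 - 1) * 4 := by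
      rw [show m - k = (m - k - 1 - 1) + 2 from by omega, pow_add]
      norm_num
    have h4 : 1 ≤ (2:ℕ) ^ (m - k) := Nat.one_le_two_pow
    omega
  have Bend : BrownGap H (2 * k + 3) = -1 := by
    have h0 : 2 * k + 3 = (2 * k + 2) + 1 := by ring
    rw [h0, hgap (2 * k + 2) (by omega),
      show 2 * k + 2 - k = k + 2 from by omega,
      show k + 2 - 1 = k + 1 from by omega, hSk2, hHs (k + 1) (by omega) le_rfl,
      show k + 1 - 1 = k from by omega]
    have h3 : (2:ℕ) ^ (k + 2) = 2 ^ k * 4 := by rw [pow_add]; norm_num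
    have h4 : 2 ≤ (2:ℕ) ^ (k + 2) := by
      calc (2:ℕ) = 2 ^ 1 := by norm_num
      _ ≤ 2 ^ (k + 2) := Nat.pow_le_pow_right (by norm_num) (by omega)
    omega
  refine ⟨?_, ?_, ?_⟩
  · -- incompleteness
    intro hcomp
    have hcast : (∑ i ∈ Finset.Icc 1 (2 * k + 2), (H i : ℤ))
        = ((∑ i ∈ Finset.Icc 1 (2 * k + 2), H i : ℕ) : ℤ) := by push_cast; rfl
    have hbig : (∑ i ∈ Finset.Icc 1 (2 * k + 2), H i) + 2 ≤ H (2 * k + 3) := by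
      have := Bend
      simp only [BrownGap, show 2 * k + 3 - 1 = 2 * k + 2 from by omega, hcast] at this
      omega
    obtain ⟨S, hS1, hSsum⟩ := hcomp (H (2 * k + 3) - 1) (by omega)
    by_cases hex : ∃ i ∈ S, 2 * k + 3 ≤ i
    · obtain ⟨i, hiS, hile⟩ := hex
      have hA : H (2 * k + 3) ≤ H i := hmono _ _ (by omega) hile
      have hB : H i ≤ ∑ j ∈ S, H j := Finset.single_le_sum (fun j _ => Nat.zero_le _) hiS
      omega
    · push_neg at hex
      have hsub : S ⊆ Finset.Icc 1 (2 * k + 2) := by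
        intro i hi
        simp only [Finset.mem_Icc]
        exact ⟨hS1 i hi, by have := hex i hi; omega⟩
      have hC : ∑ j ∈ S, H j ≤ ∑ i ∈ Finset.Icc 1 (2 * k + 2), H i :=
        Finset.sum_le_sum_of_subset hsub
      omega
  · -- nonnegative up to 2k+2
    intro n h1 h2
    rcases le_or_gt n (k + 1) with h | h
    · rw [Bzero1 n h1 h]
    · rcases eq_or_lt_of_le (Nat.succ_le_of_lt h) with h' | h'
      · rw [← h', Bk2]; norm_num
      · rw [show n = (n - 1) + 1 from by omega, Bmid (n - 1) (by omega) (by omega)]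
  · rw [Bend]; norm_num
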